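/- Let y_1, ..., y_N ∈ ℝ. Suppose z* = (z*_1, ..., z*_N) minimizes Σ_{n=1}^N (z_n - y_n)² subject to z_1 ≤ z_2 ≤ ... ≤ z_N. Then for every n with y_n ≥ y_{n+1}, we have z*_n = z*_{n+1}. -/

import Mathlib

lemma sum_update_sq (N : ℕ) (y f : Fin N → ℝ) (i : Fin N) (c : ℝ) :
    ∑ n, (Function.update f i c n - y n) ^ 2
      = ∑ n, (f n - y n) ^ 2 - (f i - y i) ^ 2 + (c - y i) ^ 2 := by
  have h1 := Finset.sum_erase_add Finset.univ
    (fun n => (Function.update f i c n - y n) ^ 2) (Finset.mem_univ i)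
  have h2 := Finset.sum_erase_add Finset.univ
    (fun n => (f n - y n) ^ 2) (Finset.mem_univ i)
  have h3 : ∑ n ∈ Finset.univ.erase i, (Function.update f i c n - y n) ^ 2
      = ∑ n ∈ Finset.univ.erase i, (f n - y n) ^ 2 :=
    Finset.sum_congr rfl fun n hn => by
      rw [Function.update_of_ne (Finset.ne_of_mem_erase hn)]
  simp only [Function.update_self] at h1
  linarith

/-- any isotonic minimizer of the square error merges adjacent
samples whose targets are in (weakly) reversed order. -/
theorem stmt_7 (N : ℕ) (y zstar : Fin N → ℝ) (hmono : Monotone zstar)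
    (hmin : ∀ z : Fin N → ℝ, Monotone z →
      (∑ n, (zstar n - y n) ^ 2) ≤ ∑ n, (z n - y n) ^ 2)
    (i : Fin N) (hi : i.val + 1 < N)
    (hy : y ⟨i.val + 1, hi⟩ ≤ y i) :
    zstar i = zstar ⟨i.val + 1, hi⟩ := by
  set i' : Fin N := ⟨i.val + 1, hi⟩ with hi'
  by_contra hne
  have hii' : i < i' := by
    rw [Fin.lt_def]; simp [hi']
  have hab : zstar i < zstar i' := lt_of_le_of_ne (hmono hii'.le) hne
  set a := zstar i with ha
  set b := zstar i' with hb
  by_cases hcase : a < y i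
  · -- raise coordinate i to c = min b (y i)
    set c := min b (y i) with hc
    have hac : a < c := lt_min hab hcase
    have hcb : c ≤ b := min_le_left _ _
    have hcy : c ≤ y i := min_le_right _ _
    set z := Function.update zstar i c with hz
    have hmz : Monotone z := by
      intro j k hjk
      rcases eq_or_ne j i with hj | hj <;> rcases eq_or_ne k i with hk | hk
      · rw [hj, hk]
      · rw [hj] at hjk ⊢
        have hik : i < k := lt_of_le_of_ne hjk hk.symm
        have hik' : i' ≤ k := by
          rw [Fin.le_def]; simpa [hi'] using hik
        simp only [hz, Function.update_self, Function.update_of_ne hk]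
        exact hcb.trans (hmono hik')
      · rw [hk] at hjk ⊢
        have hji : j ≤ i := hjk
        simp only [hz, Function.update_self, Function.update_of_ne hj]
        exact (hmono hji).trans hac.le
      · simp only [hz, Function.update_of_ne hj, Function.update_of_ne hk]
        exact hmono hjk
    have hsum := sum_update_sq N y zstar i c
    have hlt : (c - y i) ^ 2 < (a - y i) ^ 2 := by nlinarith
    have := hmin z hmz
    rw [hz, hsum] at this
    linarith
  · -- lower coordinate i' to c = max a (y i')
    push_neg at hcase
    have hby : y i' < b := lt_of_le_of_lt (hy.trans hcase) hab
    set c := max a (y i') with hc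
    have hcb : c < b := max_lt hab hby
    have hac : a ≤ c := le_max_left _ _
    have hcy : y i' ≤ c := le_max_right _ _
    set z := Function.update zstar i' c with hz
    have hmz : Monotone z := by
      intro j k hjk
      rcases eq_or_ne j i' with hj | hj <;> rcases eq_or_ne k i' with hk | hk
      · rw [hj, hk]
      · rw [hj] at hjk ⊢
        have hik : i' < k := lt_of_le_of_ne hjk hk.symm
        simp only [hz, Function.update_self, Function.update_of_ne hk]
        exact hcb.le.trans (hmono hik.le)
      · rw [hk] at hjk ⊢
        have hji : j < i' := lt_of_le_of_ne hjk hj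
        have hji2 : j ≤ i := by
          rw [Fin.le_def]
          have := (Fin.lt_def.mp hji)
          simp [hi'] at this
          omega
        simp only [hz, Function.update_self, Function.update_of_ne hj]
        exact (hmono hji2).trans hac
      · simp only [hz, Function.update_of_ne hj, Function.update_of_ne hk]
        exact hmono hjk
    have hsum := sum_update_sq N y zstar i' c
    have hlt : (c - y i') ^ 2 < (b - y i') ^ 2 := by nlinarith
    have := hmin z hmz
    rw [hz, hsum] at this
    linarith
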